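/- Let (X,G) be a dynamical system, i.e., a countable discrete group G acting by homeomorphisms on a compact Hausdorff space X (a continuous action). Let H be an almost normal subgroup of G such that the set X_H = {x ∈ X : G_x = gHg⁻¹ for some g ∈ G} is nonempty. Then for every x in the topological closure of X_H there exists g ∈ G such that gHg⁻¹ ⊆ G_x. -/

import Mathlib

/-- The conjugate subgroup `g H g⁻¹`. -/
def conjSubgroup {G : Type*} [Group G] (g : G) (H : Subgroup G) : Subgroup G :=
  Subgroup.map (MulAut.conj g).toMonoidHom H

/-- The set `X_H` of points of `X` whose stabilizer is conjugate to `H`. -/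
def setXH (G : Type*) {X : Type*} [Group G] [MulAction G X] (H : Subgroup G) : Set X :=
  {x : X | ∃ g : G, MulAction.stabilizer G x = conjSubgroup g H}

lemma conjSubgroup_mul {G : Type*} [Group G] (a b : G) (H : Subgroup G) :
    conjSubgroup (a * b) H = conjSubgroup a (conjSubgroup b H) := by
  ext x
  simp only [conjSubgroup, Subgroup.mem_map, MulEquiv.coe_toMonoidHom, MulAut.conj_apply]
  constructor
  · rintro ⟨y, hy, rfl⟩; exact ⟨b * y * b⁻¹, ⟨y, hy, rfl⟩, by group⟩
  · rintro ⟨z, ⟨y, hy, rfl⟩, rfl⟩; exact ⟨y, hy, by group⟩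

lemma conjSubgroup_of_mem_normalizer {G : Type*} [Group G] {n : G} {H : Subgroup G}
    (hn : n ∈ Subgroup.normalizer (H : Set G)) : conjSubgroup n H = H := by
  ext a
  simp only [conjSubgroup, Subgroup.mem_map, MulEquiv.coe_toMonoidHom, MulAut.conj_apply]
  constructor
  · rintro ⟨y, hy, rfl⟩
    exact (Subgroup.mem_normalizer_iff.mp hn y).mp hy
  · intro ha
    refine ⟨n⁻¹ * a * n, ?_, by group⟩
    have := (Subgroup.mem_normalizer_iff.mp hn (n⁻¹ * a * n)).symm
    rw [show n * (n⁻¹ * a * n) * n⁻¹ = a by group] at this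
    exact this.mp ha

/-- Let `(X,G)` be a dynamical system (a countable discrete group acting by homeomorphisms on a
compact Hausdorff space) and let `H` be an almost normal subgroup of `G` such that `X_H ≠ ∅`.
Then every point in the closure of `X_H` has stabilizer containing some conjugate of `H`. -/
theorem stmt1 {G X : Type*} [Group G] [Countable G]
    [TopologicalSpace X] [CompactSpace X] [T2Space X]
    [MulAction G X] [ContinuousConstSMul G X]
    (H : Subgroup G) (hAN : (Subgroup.normalizer (H : Set G)).FiniteIndex)
    (hne : (setXH G H : Set X).Nonempty) :
    ∀ x ∈ closure (setXH G H : Set X),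
      ∃ g : G, conjSubgroup g H ≤ MulAction.stabilizer G x := by
  intro x hx
  haveI := hAN
  haveI : Finite (G ⧸ Subgroup.normalizer (H : Set G)) := Subgroup.finite_quotient_of_finiteIndex
  let Fix : Subgroup G → Set X := fun K => ⋂ h ∈ (K : Set G), {x : X | h • x = x}
  have hFixClosed : ∀ K, IsClosed (Fix K) := fun K =>
    isClosed_biInter fun h _ => isClosed_eq (continuous_const_smul h) continuous_id
  have hFixMem : ∀ (K : Subgroup G) (y : X), y ∈ Fix K ↔ K ≤ MulAction.stabilizer G y := by
    intro K y
    simp only [Fix, Set.mem_iInter, Set.mem_setOf_eq, SetLike.le_def,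
      MulAction.mem_stabilizer_iff, SetLike.mem_coe]
  have hcoset : ∀ g : G,
      conjSubgroup (Quotient.out (QuotientGroup.mk (s := Subgroup.normalizer (H : Set G)) g)) H
        = conjSubgroup g H := by
    intro g
    obtain ⟨n, hn⟩ := QuotientGroup.mk_out_eq_mul (Subgroup.normalizer (H : Set G)) g
    rw [hn, conjSubgroup_mul, conjSubgroup_of_mem_normalizer n.2]
  let C : Set X := ⋃ q : G ⧸ Subgroup.normalizer (H : Set G), Fix (conjSubgroup (Quotient.out q) H)
  have hCclosed : IsClosed C := isClosed_iUnion_of_finite fun q => hFixClosed _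
  have hsub : setXH G H ⊆ C := by
    rintro y ⟨g, hg⟩
    refine Set.mem_iUnion.mpr ⟨QuotientGroup.mk g, (hFixMem _ _).mpr ?_⟩
    rw [hcoset g, hg]
  have hxC : x ∈ C := closure_minimal hsub hCclosed hx
  obtain ⟨q, hq⟩ := Set.mem_iUnion.mp hxC
  exact ⟨Quotient.out q, (hFixMem _ _).mp hq⟩
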